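/- (Theorem 4(c).) Under the hypotheses of Theorem 2 (closed-loop unicycle dynamics with the range-only controller ω = v/d + v·k₁·Ω(β) + v·k₂·((r − d)/r)·η(r − d), auxiliary state ż = −κ·z + (1/2)·r², β = −κ·z + (1/2)·r², v ≠ 0 constant, k₁, k₂, κ > 0, r(0) ∈ (r_i, r_o)), let α₁ : [0, ∞) → [0, ∞) be a strictly increasing continuous function with α₁(0) = 0 and α₁(|s|) ≤ ∫₀ˢ Ω(τ) dτ for all s ∈ ℝ. Then for all t ≥ 0, α₁(|β(t)|) ≤ V₂(0)/(d·k₁), where V₂(0) = (1/2)(ē_x(0)² + ē_y(0)²) + d·k₂·V_r(r(0) − d) + d·k₁·∫₀^{β(0)} Ω(τ) dτ. -/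

import Mathlib

/-- Range r(t) = √((x(t) − x_T)² + (y(t) − y_T)²). -/
noncomputable def rng (x y : ℝ → ℝ) (xT yT : ℝ) (t : ℝ) : ℝ :=
  Real.sqrt ((x t - xT) ^ 2 + (y t - yT) ^ 2)

/-- Transformed error ē_x(t) = (x(t) − x_T)·cos θ(t) + (y(t) − y_T)·sin θ(t). -/
noncomputable def ebx (x y θ : ℝ → ℝ) (xT yT : ℝ) (t : ℝ) : ℝ :=
  (x t - xT) * Real.cos (θ t) + (y t - yT) * Real.sin (θ t)

/-- Transformed error ē_y(t) = −(x(t) − x_T)·sin θ(t) + (y(t) − y_T)·cos θ(t) + d. -/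
noncomputable def eby (x y θ : ℝ → ℝ) (xT yT d : ℝ) (t : ℝ) : ℝ :=
  -(x t - xT) * Real.sin (θ t) + (y t - yT) * Real.cos (θ t) + d

/-- The asymmetric barrier Lyapunov function V_r. -/
noncomputable def Vr (δa δb e : ℝ) : ℝ :=
  if 0 < e then (1 / 2) * Real.log (δb ^ 2 / (δb ^ 2 - e ^ 2))
  else (1 / 2) * Real.log (δa ^ 2 / (δa ^ 2 - e ^ 2))

/-- η(e) = 1/(δ_b² − e²) for e > 0 and η(e) = 1/(δ_a² − e²) for e ≤ 0. -/
noncomputable def eta (δa δb e : ℝ) : ℝ :=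
  if 0 < e then 1 / (δb ^ 2 - e ^ 2) else 1 / (δa ^ 2 - e ^ 2)

/-- The estimation signal β(t) = −κ·z(t) + (1/2)·r(t)². -/
noncomputable def beta (x y : ℝ → ℝ) (z : ℝ → ℝ) (κ xT yT : ℝ) (t : ℝ) : ℝ :=
  -κ * z t + (1 / 2) * (rng x y xT yT t) ^ 2

lemma half_log_hasDerivAt {δ e : ℝ} (hδ : 0 < δ) (he : e ^ 2 < δ ^ 2) :
    HasDerivAt (fun u => (1 / 2) * Real.log (δ ^ 2 / (δ ^ 2 - u ^ 2))) (e / (δ ^ 2 - e ^ 2)) e := by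
  have hne : δ ^ 2 - e ^ 2 ≠ 0 := by nlinarith
  have hδ2 : (δ:ℝ) ^ 2 ≠ 0 := by positivity
  have hd : HasDerivAt (fun u : ℝ => δ ^ 2 - u ^ 2) (-(2 * e)) e := by
    simpa using (HasDerivAt.const_sub (δ ^ 2) (hasDerivAt_pow 2 e))
  have hq : HasDerivAt (fun u : ℝ => δ ^ 2 / (δ ^ 2 - u ^ 2))
      ((0 * (δ ^ 2 - e ^ 2) - δ ^ 2 * (-(2 * e))) / (δ ^ 2 - e ^ 2) ^ 2) e :=
    (hasDerivAt_const e (δ ^ 2)).div hd hne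
  have hfx : δ ^ 2 / (δ ^ 2 - e ^ 2) ≠ 0 := div_ne_zero hδ2 hne
  have := (hq.log hfx).const_mul (1 / 2 : ℝ)
  convert this using 1
  · rfl
  · rfl
  field_simp
  ring

lemma vr_hasDerivAt {δa δb e : ℝ} (ha : 0 < δa) (hb : 0 < δb)
    (h1 : -δa < e) (h2 : e < δb) :
    HasDerivAt (Vr δa δb) (e * eta δa δb e) e := by
  rcases lt_trichotomy e 0 with hneg | rfl | hpos
  · have he2 : e ^ 2 < δa ^ 2 := by nlinarith
    have hfa := half_log_hasDerivAt ha he2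
    have heq : Vr δa δb =ᶠ[nhds e] fun u => (1 / 2) * Real.log (δa ^ 2 / (δa ^ 2 - u ^ 2)) := by
      filter_upwards [Iio_mem_nhds hneg] with u hu
      simp [Vr, not_lt.2 (le_of_lt (Set.mem_Iio.mp hu))]
    have : HasDerivAt (Vr δa δb) (e / (δa ^ 2 - e ^ 2)) e :=
      HasDerivAt.congr_of_eventuallyEq hfa heq
    simpa [eta, not_lt.2 (le_of_lt hneg), div_eq_mul_inv, mul_comm, one_div] using this
  · -- gluing at 0
    have hb2 : (0:ℝ) ^ 2 < δb ^ 2 := by nlinarith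
    have ha2 : (0:ℝ) ^ 2 < δa ^ 2 := by nlinarith
    have hfb := (half_log_hasDerivAt hb hb2).hasDerivWithinAt (s := Set.Ici (0:ℝ))
    have hfa := (half_log_hasDerivAt ha ha2).hasDerivWithinAt (s := Set.Iic (0:ℝ))
    have hVb : HasDerivWithinAt (Vr δa δb) ((0:ℝ) / (δb ^ 2 - (0:ℝ) ^ 2)) (Set.Ici 0) 0 := by
      refine hfb.congr (fun u hu => ?_) ?_
      · rcases eq_or_lt_of_le (Set.mem_Ici.mp hu) with h | h
        · simp [Vr, ← h, div_self (by positivity : (δa:ℝ)^2 ≠ 0),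
            div_self (by positivity : (δb:ℝ)^2 ≠ 0)]
        · simp [Vr, h]
      · simp [Vr, div_self (by positivity : (δa:ℝ)^2 ≠ 0),
          div_self (by positivity : (δb:ℝ)^2 ≠ 0)]
    have hVa : HasDerivWithinAt (Vr δa δb) ((0:ℝ) / (δb ^ 2 - (0:ℝ) ^ 2)) (Set.Iic 0) 0 := by
      have : ((0:ℝ) / (δb ^ 2 - (0:ℝ) ^ 2)) = ((0:ℝ) / (δa ^ 2 - (0:ℝ) ^ 2)) := by simp
      rw [this]
      refine hfa.congr (fun u hu => ?_) ?_
      · simp [Vr, not_lt.2 (Set.mem_Iic.mp hu)]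
      · simp [Vr]
    have := hVa.union hVb
    rw [Set.Iic_union_Ici] at this
    have h0 : HasDerivAt (Vr δa δb) ((0:ℝ) / (δb ^ 2 - (0:ℝ) ^ 2)) 0 := by
      simpa [hasDerivWithinAt_univ] using this
    simpa using h0
  · have he2 : e ^ 2 < δb ^ 2 := by nlinarith
    have hfb := half_log_hasDerivAt hb he2
    have heq : Vr δa δb =ᶠ[nhds e] fun u => (1 / 2) * Real.log (δb ^ 2 / (δb ^ 2 - u ^ 2)) := by
      filter_upwards [Ioi_mem_nhds hpos] with u hu
      simp [Vr, Set.mem_Ioi.mp hu]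
    have : HasDerivAt (Vr δa δb) (e / (δb ^ 2 - e ^ 2)) e :=
      HasDerivAt.congr_of_eventuallyEq hfb heq
    simpa [eta, hpos, div_eq_mul_inv, one_div] using this


lemma omega_nonneg_of_nonneg {Ω : ℝ → ℝ} (hΩ0 : Ω 0 = 0)
    (hΩpos : ∀ s : ℝ, s ≠ 0 → 0 < s * Ω s) {u : ℝ} (hu : 0 ≤ u) : 0 ≤ Ω u := by
  rcases eq_or_lt_of_le hu with h | h
  · simp [← h, hΩ0]
  · nlinarith [hΩpos u (ne_of_gt h)]

lemma omega_nonpos_of_nonpos {Ω : ℝ → ℝ} (hΩ0 : Ω 0 = 0)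
    (hΩpos : ∀ s : ℝ, s ≠ 0 → 0 < s * Ω s) {u : ℝ} (hu : u ≤ 0) : Ω u ≤ 0 := by
  rcases eq_or_lt_of_le hu with h | h
  · simp [h, hΩ0]
  · nlinarith [hΩpos u (ne_of_lt h)]

lemma mul_omega_nonneg {Ω : ℝ → ℝ} (hΩ0 : Ω 0 = 0)
    (hΩpos : ∀ s : ℝ, s ≠ 0 → 0 < s * Ω s) (u : ℝ) : 0 ≤ u * Ω u := by
  rcases eq_or_ne u 0 with rfl | h
  · simp
  · exact (hΩpos u h).le

open intervalIntegral in
lemma integral_omega_nonneg {Ω : ℝ → ℝ} (hΩcont : Continuous Ω) (hΩ0 : Ω 0 = 0)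
    (hΩpos : ∀ s : ℝ, s ≠ 0 → 0 < s * Ω s) (s : ℝ) :
    0 ≤ ∫ τ in (0 : ℝ)..s, Ω τ := by
  rcases le_or_gt 0 s with h | h
  · exact intervalIntegral.integral_nonneg h
      (fun u hu => omega_nonneg_of_nonneg hΩ0 hΩpos hu.1)
  · rw [integral_symm s 0]
    have h2 : 0 ≤ ∫ τ in s..(0:ℝ), -Ω τ :=
      intervalIntegral.integral_nonneg h.le
        (fun u hu => by simpa using omega_nonpos_of_nonpos hΩ0 hΩpos hu.2)
    rw [intervalIntegral.integral_neg] at h2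
    linarith

lemma vr_bound {δ e M : ℝ} (hδ : 0 < δ) (he : 0 ≤ e) (helt : e < δ)
    (h : (1 / 2) * Real.log (δ ^ 2 / (δ ^ 2 - e ^ 2)) ≤ M) :
    e ≤ δ * Real.sqrt (1 - Real.exp (-(2 * M))) := by
  have hpos : 0 < δ ^ 2 - e ^ 2 := by nlinarith
  have harg : 0 < δ ^ 2 / (δ ^ 2 - e ^ 2) := by positivity
  have hlog : Real.log (δ ^ 2 / (δ ^ 2 - e ^ 2)) ≤ 2 * M := by linarith
  have hle : δ ^ 2 / (δ ^ 2 - e ^ 2) ≤ Real.exp (2 * M) :=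
    (Real.log_le_iff_le_exp harg).mp hlog
  have hle2 : δ ^ 2 ≤ Real.exp (2 * M) * (δ ^ 2 - e ^ 2) := by
    rw [div_le_iff₀ hpos] at hle
    linarith
  have hE : Real.exp (-(2 * M)) * Real.exp (2 * M) = 1 := by
    rw [← Real.exp_add]; simp
  have hEpos : 0 < Real.exp (-(2 * M)) := Real.exp_pos _
  have he2 : e ^ 2 ≤ δ ^ 2 * (1 - Real.exp (-(2 * M))) := by
    have := mul_le_mul_of_nonneg_left hle2 hEpos.le
    nlinarith [hE]
  calc e = Real.sqrt (e ^ 2) := (Real.sqrt_sq he).symm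
    _ ≤ Real.sqrt (δ ^ 2 * (1 - Real.exp (-(2 * M)))) := Real.sqrt_le_sqrt he2
    _ = δ * Real.sqrt (1 - Real.exp (-(2 * M))) := by
        rw [Real.sqrt_mul (sq_nonneg δ), Real.sqrt_sq hδ.le]

lemma sqrt_one_sub_exp_lt_one {M : ℝ} : Real.sqrt (1 - Real.exp (-(2 * M))) < 1 := by
  rcases le_or_gt (1 - Real.exp (-(2 * M))) 0 with h | h
  · rw [Real.sqrt_eq_zero_of_nonpos h]; norm_num
  · have h1 : Real.sqrt (1 - Real.exp (-(2 * M))) < Real.sqrt 1 :=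
      Real.sqrt_lt_sqrt (le_of_lt h) (by nlinarith [Real.exp_pos (-(2*M))])
    simpa using h1

lemma vr_nonneg {δa δb e : ℝ} (ha : 0 < δa) (hb : 0 < δb)
    (h1 : -δa < e) (h2 : e < δb) : 0 ≤ Vr δa δb e := by
  unfold Vr
  split_ifs with h
  · apply mul_nonneg (by norm_num)
    apply Real.log_nonneg
    rw [one_le_div (by nlinarith : (0:ℝ) < δb ^ 2 - e ^ 2)]
    nlinarith
  · apply mul_nonneg (by norm_num)
    apply Real.log_nonneg
    rw [one_le_div (by nlinarith : (0:ℝ) < δa ^ 2 - e ^ 2)]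
    nlinarith

lemma W_hasDerivAt
    (x y θ z : ℝ → ℝ) (Ω : ℝ → ℝ) (v d k1 k2 κ ri ro xT yT : ℝ)
    (hΩcont : Continuous Ω)
    (hri : 0 < ri) (hrid : ri < d) (hdro : d < ro)
    (t : ℝ)
    (hx : HasDerivAt x (v * Real.cos (θ t)) t)
    (hy : HasDerivAt y (v * Real.sin (θ t)) t)
    (hz : HasDerivAt z (-κ * z t + (1 / 2) * (rng x y xT yT t) ^ 2) t)
    (hθ : HasDerivAt θ (v / d + v * k1 * Ω (beta x y z κ xT yT t) +
        v * k2 * ((rng x y xT yT t - d) / rng x y xT yT t) *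
          eta (d - ri) (ro - d) (rng x y xT yT t - d)) t)
    (hrin : rng x y xT yT t ∈ Set.Ioo ri ro) :
    HasDerivAt (fun s => (1 / 2) * ((ebx x y θ xT yT s) ^ 2 + (eby x y θ xT yT d s) ^ 2) +
      d * k2 * Vr (d - ri) (ro - d) (rng x y xT yT s - d) +
      d * k1 * ∫ τ in (0 : ℝ)..(beta x y z κ xT yT s), Ω τ)
      (-(d * k1 * κ * (beta x y z κ xT yT t) * Ω (beta x y z κ xT yT t))) t := by
  have hd0 : (0:ℝ) < d := lt_trans hri hrid
  have hR : 0 < rng x y xT yT t := lt_trans hri hrin.1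
  have hRne : rng x y xT yT t ≠ 0 := ne_of_gt hR
  have hqsq : ∀ s, rng x y xT yT s ^ 2 = (x s - xT) ^ 2 + (y s - yT) ^ 2 := by
    intro s
    exact Real.sq_sqrt (by positivity)
  have hqpos : 0 < (x t - xT) ^ 2 + (y t - yT) ^ 2 := by
    rw [← hqsq]; positivity
  have hex : HasDerivAt (fun s => x s - xT) (v * Real.cos (θ t)) t := hx.sub_const xT
  have hey : HasDerivAt (fun s => y s - yT) (v * Real.sin (θ t)) t := hy.sub_const yT
  -- derivative of squared distance
  have hqd : HasDerivAt (fun s => (x s - xT) ^ 2 + (y s - yT) ^ 2)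
      (2 * (v * ebx x y θ xT yT t)) t := by
    have := (hex.pow 2).add (hey.pow 2)
    convert this using 1
    · rfl
    · rfl
    · rfl
    unfold ebx; push_cast; ring
  -- derivative of the range
  have hrd : HasDerivAt (rng x y xT yT) (v * ebx x y θ xT yT t / rng x y xT yT t) t := by
    have hs : HasDerivAt (fun s => Real.sqrt ((x s - xT) ^ 2 + (y s - yT) ^ 2))
        (2 * (v * ebx x y θ xT yT t) / (2 * Real.sqrt ((x t - xT) ^ 2 + (y t - yT) ^ 2))) t :=
      hqd.sqrt (ne_of_gt hqpos)
    have hs' : HasDerivAt (rng x y xT yT)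
        (2 * (v * ebx x y θ xT yT t) / (2 * rng x y xT yT t)) t := hs
    convert hs' using 1
    field_simp
  -- derivative of beta
  have hβd : HasDerivAt (beta x y z κ xT yT)
      (-κ * beta x y z κ xT yT t + v * ebx x y θ xT yT t) t := by
    have hfun : beta x y z κ xT yT =
        fun s => -κ * z s + (1 / 2) * ((x s - xT) ^ 2 + (y s - yT) ^ 2) := by
      funext s
      show -κ * z s + (1 / 2) * (rng x y xT yT s) ^ 2 = _
      rw [hqsq s]
    rw [hfun]
    have := ((hz.const_mul (-κ)).add (hqd.const_mul (1/2 : ℝ)))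
    convert this using 1
    · rfl
    · rfl
    · rfl
    simp only [beta, hqsq t]
    ring
  -- trig derivatives
  set ω := v / d + v * k1 * Ω (beta x y z κ xT yT t) +
      v * k2 * ((rng x y xT yT t - d) / rng x y xT yT t) *
        eta (d - ri) (ro - d) (rng x y xT yT t - d) with hω
  have hcos : HasDerivAt (fun s => Real.cos (θ s)) (-Real.sin (θ t) * ω) t :=
    (Real.hasDerivAt_cos (θ t)).comp t hθ
  have hsin : HasDerivAt (fun s => Real.sin (θ s)) (Real.cos (θ t) * ω) t :=
    (Real.hasDerivAt_sin (θ t)).comp t hθ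
  -- transformed error derivatives
  have hebx : HasDerivAt (ebx x y θ xT yT)
      (v + ω * (eby x y θ xT yT d t - d)) t := by
    have h := (hex.mul hcos).add (hey.mul hsin)
    have hfun : ebx x y θ xT yT =
        fun s => (x s - xT) * Real.cos (θ s) + (y s - yT) * Real.sin (θ s) := rfl
    rw [hfun]
    convert h using 1
    · rfl
    · rfl
    · rfl
    have pyth := Real.sin_sq_add_cos_sq (θ t)
    unfold eby
    linear_combination -v * pyth
  have heby : HasDerivAt (eby x y θ xT yT d)
      (-ω * ebx x y θ xT yT t) t := by
    have h := (((hex.neg).mul hsin).add (hey.mul hcos)).add_const d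
    have hfun : eby x y θ xT yT d =
        fun s => -(x s - xT) * Real.sin (θ s) + (y s - yT) * Real.cos (θ s) + d := rfl
    rw [hfun]
    convert h using 1
    · rfl
    · rfl
    · rfl
    unfold ebx
    simp only [Pi.neg_apply]
    ring
  -- barrier derivative
  have hVrd : HasDerivAt (fun s => Vr (d - ri) (ro - d) (rng x y xT yT s - d))
      ((rng x y xT yT t - d) * eta (d - ri) (ro - d) (rng x y xT yT t - d) *
        (v * ebx x y θ xT yT t / rng x y xT yT t)) t := by
    have hvr := vr_hasDerivAt (δa := d - ri) (δb := ro - d) (e := rng x y xT yT t - d)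
      (by linarith) (by linarith) (by linarith [hrin.1]) (by linarith [hrin.2])
    exact hvr.comp t (hrd.sub_const d)
  -- integral derivative
  have hFd : HasDerivAt (fun s => ∫ τ in (0:ℝ)..(beta x y z κ xT yT s), Ω τ)
      (Ω (beta x y z κ xT yT t) * (-κ * beta x y z κ xT yT t + v * ebx x y θ xT yT t)) t := by
    have hI : HasDerivAt (fun u => ∫ τ in (0:ℝ)..u, Ω τ) (Ω (beta x y z κ xT yT t))
        (beta x y z κ xT yT t) :=
      intervalIntegral.integral_hasDerivAt_right
        (hΩcont.intervalIntegrable _ _)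
        (hΩcont.stronglyMeasurableAtFilter _ _)
        hΩcont.continuousAt
    exact hI.comp t hβd
  -- assemble
  have h1 : HasDerivAt (fun s => (ebx x y θ xT yT s) ^ 2 + (eby x y θ xT yT d s) ^ 2)
      (2 * ebx x y θ xT yT t ^ 1 * (v + ω * (eby x y θ xT yT d t - d)) +
        2 * eby x y θ xT yT d t ^ 1 * (-ω * ebx x y θ xT yT t)) t := by
    have := (hebx.pow 2).add (heby.pow 2)
    convert this using 2
    · rfl
    · rfl
    · rfl
    all_goals push_cast
    all_goals ring
  have hW := ((h1.const_mul (1/2 : ℝ)).add (hVrd.const_mul (d * k2))).add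
      (hFd.const_mul (d * k1))
  convert hW using 1
  · rfl
  · rfl
  · rfl
  rw [hω]
  field_simp
  ring

set_option maxHeartbeats 1000000
/-- Theorem 4(c): Under the hypotheses of Theorem 2, if α₁ is a strictly
increasing continuous class-K function with α₁(|s|) ≤ ∫₀ˢ Ω(τ) dτ for all s, then
α₁(|β(t)|) ≤ V₂(0)/(d·k₁) for all t ≥ 0. -/
theorem theorem4c_beta_bound
    (x y θ z : ℝ → ℝ) (Ω α₁ : ℝ → ℝ) (v d k1 k2 κ ri ro xT yT : ℝ)
    (hΩcont : Continuous Ω) (hΩ0 : Ω 0 = 0) (hΩpos : ∀ s : ℝ, s ≠ 0 → 0 < s * Ω s)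
    (hα₁mono : StrictMonoOn α₁ (Set.Ici 0)) (hα₁cont : ContinuousOn α₁ (Set.Ici 0))
    (hα₁0 : α₁ 0 = 0)
    (hα₁le : ∀ s : ℝ, α₁ |s| ≤ ∫ τ in (0 : ℝ)..s, Ω τ)
    (hv : v ≠ 0) (hri : 0 < ri) (hrid : ri < d) (hdro : d < ro)
    (hk1 : 0 < k1) (hk2 : 0 < k2) (hκ : 0 < κ)
    (hxdiff : ∀ t ≥ (0 : ℝ), DifferentiableAt ℝ x t)
    (hydiff : ∀ t ≥ (0 : ℝ), DifferentiableAt ℝ y t)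
    (hθdiff : ∀ t ≥ (0 : ℝ), DifferentiableAt ℝ θ t)
    (hzdiff : ∀ t ≥ (0 : ℝ), DifferentiableAt ℝ z t)
    (hclosedloop : ∀ t ≥ (0 : ℝ), rng x y xT yT t ∈ Set.Ioo ri ro →
      HasDerivAt x (v * Real.cos (θ t)) t ∧
      HasDerivAt y (v * Real.sin (θ t)) t ∧
      HasDerivAt z (-κ * z t + (1 / 2) * (rng x y xT yT t) ^ 2) t ∧
      HasDerivAt θ (v / d + v * k1 * Ω (beta x y z κ xT yT t) +
        v * k2 * ((rng x y xT yT t - d) / rng x y xT yT t) *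
          eta (d - ri) (ro - d) (rng x y xT yT t - d)) t)
    (hr0 : rng x y xT yT 0 ∈ Set.Ioo ri ro)
    (V20 : ℝ)
    (hV20 : V20 = (1 / 2) * ((ebx x y θ xT yT 0) ^ 2 + (eby x y θ xT yT d 0) ^ 2) +
      d * k2 * Vr (d - ri) (ro - d) (rng x y xT yT 0 - d) +
      d * k1 * ∫ τ in (0 : ℝ)..(beta x y z κ xT yT 0), Ω τ) :
    ∀ t ≥ (0 : ℝ), α₁ |beta x y z κ xT yT t| ≤ V20 / (d * k1) := by
  have hd0 : (0:ℝ) < d := lt_trans hri hrid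
  have hδa : (0:ℝ) < d - ri := by linarith
  have hδb : (0:ℝ) < ro - d := by linarith
  set W : ℝ → ℝ := fun s => (1 / 2) * ((ebx x y θ xT yT s) ^ 2 + (eby x y θ xT yT d s) ^ 2) +
      d * k2 * Vr (d - ri) (ro - d) (rng x y xT yT s - d) +
      d * k1 * ∫ τ in (0 : ℝ)..(beta x y z κ xT yT s), Ω τ with hWdef
  have hW0 : W 0 = V20 := hV20.symm
  have hWd : ∀ s ≥ (0:ℝ), rng x y xT yT s ∈ Set.Ioo ri ro →
      HasDerivAt W (-(d * k1 * κ * (beta x y z κ xT yT s) * Ω (beta x y z κ xT yT s))) s := by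
    intro s hs hin
    obtain ⟨hx, hy, hz, hθ⟩ := hclosedloop s hs hin
    exact W_hasDerivAt x y θ z Ω v d k1 k2 κ ri ro xT yT hΩcont hri hrid hdro s hx hy hz hθ hin
  have hrc : ∀ s ≥ (0:ℝ), ContinuousAt (rng x y xT yT) s := by
    intro s hs
    have hq : ContinuousAt (fun u => (x u - xT) ^ 2 + (y u - yT) ^ 2) s :=
      (((hxdiff s hs).continuousAt.sub continuousAt_const).pow 2).add
        (((hydiff s hs).continuousAt.sub continuousAt_const).pow 2)
    exact Real.continuous_sqrt.continuousAt.comp hq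
  have hF_nonneg : ∀ s : ℝ, 0 ≤ ∫ τ in (0:ℝ)..s, Ω τ :=
    integral_omega_nonneg hΩcont hΩ0 hΩpos
  -- dropping terms from W
  have hdrop2 : ∀ u : ℝ, rng x y xT yT u ∈ Set.Ioo ri ro →
      d * k2 * Vr (d - ri) (ro - d) (rng x y xT yT u - d) ≤ W u := by
    intro u hu
    have h2 : 0 ≤ Vr (d - ri) (ro - d) (rng x y xT yT u - d) :=
      vr_nonneg hδa hδb (by linarith [hu.1]) (by linarith [hu.2])
    have h3 : 0 ≤ ∫ τ in (0:ℝ)..(beta x y z κ xT yT u), Ω τ := hF_nonneg _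
    show d * k2 * Vr (d - ri) (ro - d) (rng x y xT yT u - d) ≤
      (1 / 2) * ((ebx x y θ xT yT u) ^ 2 + (eby x y θ xT yT d u) ^ 2) +
      d * k2 * Vr (d - ri) (ro - d) (rng x y xT yT u - d) +
      d * k1 * ∫ τ in (0 : ℝ)..(beta x y z κ xT yT u), Ω τ
    nlinarith [sq_nonneg (ebx x y θ xT yT u), sq_nonneg (eby x y θ xT yT d u),
      mul_nonneg (mul_pos hd0 hk1).le h3]
  have hdrop3 : ∀ u : ℝ, rng x y xT yT u ∈ Set.Ioo ri ro →
      d * k1 * (∫ τ in (0:ℝ)..(beta x y z κ xT yT u), Ω τ) ≤ W u := by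
    intro u hu
    have h2 : 0 ≤ Vr (d - ri) (ro - d) (rng x y xT yT u - d) :=
      vr_nonneg hδa hδb (by linarith [hu.1]) (by linarith [hu.2])
    show d * k1 * (∫ τ in (0:ℝ)..(beta x y z κ xT yT u), Ω τ) ≤
      (1 / 2) * ((ebx x y θ xT yT u) ^ 2 + (eby x y θ xT yT d u) ^ 2) +
      d * k2 * Vr (d - ri) (ro - d) (rng x y xT yT u - d) +
      d * k1 * ∫ τ in (0 : ℝ)..(beta x y z κ xT yT u), Ω τ
    nlinarith [sq_nonneg (ebx x y θ xT yT u), sq_nonneg (eby x y θ xT yT d u),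
      mul_nonneg (mul_pos hd0 hk2).le h2]
  have hV20nn : 0 ≤ V20 := by
    rw [← hW0]
    refine le_trans ?_ (hdrop2 0 hr0)
    exact mul_nonneg (mul_pos hd0 hk2).le
      (vr_nonneg hδa hδb (by linarith [hr0.1]) (by linarith [hr0.2]))
  set M := V20 / (d * k2) with hMdef
  have hVrM : ∀ u : ℝ, rng x y xT yT u ∈ Set.Ioo ri ro → W u ≤ V20 →
      Vr (d - ri) (ro - d) (rng x y xT yT u - d) ≤ M := by
    intro u hu hWu
    rw [hMdef, le_div_iff₀ (mul_pos hd0 hk2)]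
    have := hdrop2 u hu
    nlinarith
  set ea := (d - ri) * Real.sqrt (1 - Real.exp (-(2 * M))) with headef
  set eb := (ro - d) * Real.sqrt (1 - Real.exp (-(2 * M))) with hebdef
  have hsq1 : Real.sqrt (1 - Real.exp (-(2 * M))) < 1 := sqrt_one_sub_exp_lt_one
  have hsq0 : 0 ≤ Real.sqrt (1 - Real.exp (-(2 * M))) := Real.sqrt_nonneg _
  have hea : ea < d - ri := by rw [headef]; nlinarith
  have heb : eb < ro - d := by rw [hebdef]; nlinarith
  have hea0 : 0 ≤ ea := mul_nonneg hδa.le hsq0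
  have heb0 : 0 ≤ eb := mul_nonneg hδb.le hsq0
  -- from the barrier bound, the range is confined to a compact subinterval
  have hIcc : ∀ u : ℝ, rng x y xT yT u ∈ Set.Ioo ri ro →
      Vr (d - ri) (ro - d) (rng x y xT yT u - d) ≤ M →
      rng x y xT yT u ∈ Set.Icc (d - ea) (d + eb) := by
    intro u hu hVru
    set e := rng x y xT yT u - d with hedef
    have he1 : -(d - ri) < e := by rw [hedef]; linarith [hu.1]
    have he2 : e < ro - d := by rw [hedef]; linarith [hu.2]
    rcases lt_or_ge 0 e with hpos | hneg
    · have hval : Vr (d - ri) (ro - d) e =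
          (1 / 2) * Real.log ((ro - d) ^ 2 / ((ro - d) ^ 2 - e ^ 2)) := if_pos hpos
      rw [hval] at hVru
      have := vr_bound hδb hpos.le he2 hVru
      constructor
      · have : d - ea ≤ d := by linarith
        rw [hedef] at hpos
        linarith
      · rw [hedef] at this; linarith
    · have hval : Vr (d - ri) (ro - d) e =
          (1 / 2) * Real.log ((d - ri) ^ 2 / ((d - ri) ^ 2 - e ^ 2)) := if_neg (not_lt.mpr hneg)
      rw [hval] at hVru
      have hVru' : (1 / 2) * Real.log ((d - ri) ^ 2 / ((d - ri) ^ 2 - (-e) ^ 2)) ≤ M := by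
        rw [neg_sq]; exact hVru
      have := vr_bound hδa (by linarith : (0:ℝ) ≤ -e) (by linarith : -e < d - ri) hVru'
      constructor
      · rw [hedef] at this; linarith
      · rw [hedef] at hneg; linarith
  -- forward invariance of the annulus
  have hinv : ∀ s ≥ (0:ℝ), rng x y xT yT s ∈ Set.Ioo ri ro := by
    by_contra hcon
    push_neg at hcon
    obtain ⟨s₀, hs₀0, hs₀⟩ := hcon
    set B := {s : ℝ | 0 ≤ s ∧ rng x y xT yT s ∉ Set.Ioo ri ro} with hBdef
    have hBne : B.Nonempty := ⟨s₀, hs₀0, hs₀⟩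
    have hBbd : BddBelow B := ⟨0, fun b hb => hb.1⟩
    set τ := sInf B with hτdef
    have hτ0 : 0 ≤ τ := le_csInf hBne (fun b hb => hb.1)
    have hτmem : rng x y xT yT τ ∉ Set.Ioo ri ro := by
      intro hmem
      have hev : ∀ᶠ u in nhds τ, rng x y xT yT u ∈ Set.Ioo ri ro :=
        (hrc τ hτ0).eventually_mem (isOpen_Ioo.mem_nhds hmem)
      obtain ⟨ε, hε, hball⟩ := Metric.eventually_nhds_iff.mp hev
      have hlb : τ + ε / 2 ≤ τ := by
        rw [hτdef]
        apply le_csInf hBne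
        intro b hb
        by_contra hlt
        push_neg at hlt
        have hbτ : τ ≤ b := csInf_le hBbd hb
        have hdist : dist b τ < ε := by
          rw [Real.dist_eq, abs_lt]
          constructor <;> [linarith; linarith]
        exact hb.2 (hball hdist)
      linarith
    have hτpos : 0 < τ := by
      rcases eq_or_lt_of_le hτ0 with h | h
      · rw [← h] at hτmem; exact absurd hr0 hτmem
      · exact h
    have hin : ∀ u ∈ Set.Ico (0:ℝ) τ, rng x y xT yT u ∈ Set.Ioo ri ro := by
      intro u hu
      by_contra hnot
      have : τ ≤ u := csInf_le hBbd ⟨hu.1, hnot⟩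
      linarith [hu.2]
    have hanti : AntitoneOn W (Set.Ico 0 τ) := by
      apply antitoneOn_of_deriv_nonpos (convex_Ico 0 τ)
      · intro u hu
        exact ((hWd u hu.1 (hin u hu)).continuousAt).continuousWithinAt
      · rw [interior_Ico]
        intro u hu
        exact ((hWd u hu.1.le (hin u ⟨hu.1.le, hu.2⟩)).differentiableAt).differentiableWithinAt
      · rw [interior_Ico]
        intro u hu
        rw [(hWd u hu.1.le (hin u ⟨hu.1.le, hu.2⟩)).deriv]
        have h1 := mul_omega_nonneg hΩ0 hΩpos (beta x y z κ xT yT u)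
        nlinarith [mul_pos (mul_pos hd0 hk1) hκ]
    have hIccmem : ∀ u ∈ Set.Ico (0:ℝ) τ, rng x y xT yT u ∈ Set.Icc (d - ea) (d + eb) := by
      intro u hu
      refine hIcc u (hin u hu) (hVrM u (hin u hu) ?_)
      have h0m : (0:ℝ) ∈ Set.Ico (0:ℝ) τ := ⟨le_refl 0, hτpos⟩
      have := hanti h0m hu hu.1
      rw [hW0] at this
      exact this
    have hneb : (nhdsWithin τ (Set.Ico 0 τ)).NeBot := by
      apply mem_closure_iff_nhdsWithin_neBot.mp
      rw [closure_Ico (ne_of_lt hτpos)]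
      exact ⟨hτ0, le_refl τ⟩
    have htend : Filter.Tendsto (rng x y xT yT) (nhdsWithin τ (Set.Ico 0 τ))
        (nhds (rng x y xT yT τ)) :=
      ((hrc τ hτ0).continuousWithinAt)
    have hmemIcc : rng x y xT yT τ ∈ Set.Icc (d - ea) (d + eb) :=
      isClosed_Icc.mem_of_tendsto htend
        (Filter.eventually_of_mem self_mem_nhdsWithin (fun u hu => hIccmem u hu))
    exact hτmem ⟨by linarith [hmemIcc.1], by linarith [hmemIcc.2]⟩
  -- W is nonincreasing on all of [0, ∞)
  have hantiW : AntitoneOn W (Set.Ici 0) := by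
    apply antitoneOn_of_deriv_nonpos (convex_Ici 0)
    · intro u hu
      exact ((hWd u hu (hinv u hu)).continuousAt).continuousWithinAt
    · rw [interior_Ici]
      intro u hu
      exact ((hWd u (le_of_lt hu) (hinv u (le_of_lt hu))).differentiableAt).differentiableWithinAt
    · rw [interior_Ici]
      intro u hu
      rw [(hWd u (le_of_lt hu) (hinv u (le_of_lt hu))).deriv]
      have h1 := mul_omega_nonneg hΩ0 hΩpos (beta x y z κ xT yT u)
      nlinarith [mul_pos (mul_pos hd0 hk1) hκ]
  intro t ht
  have hWt : W t ≤ V20 := by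
    have := hantiW (Set.mem_Ici.mpr (le_refl (0:ℝ))) (Set.mem_Ici.mpr ht) ht
    rw [hW0] at this
    exact this
  have hFle : d * k1 * (∫ τ in (0:ℝ)..(beta x y z κ xT yT t), Ω τ) ≤ V20 :=
    le_trans (hdrop3 t (hinv t ht)) hWt
  calc α₁ |beta x y z κ xT yT t| ≤ ∫ τ in (0:ℝ)..(beta x y z κ xT yT t), Ω τ := hα₁le _
    _ ≤ V20 / (d * k1) := by
        rw [le_div_iff₀ (mul_pos hd0 hk1)]
        linarith [hFle, mul_comm (d * k1) (∫ τ in (0:ℝ)..(beta x y z κ xT yT t), Ω τ)]
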